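/- Let A ⊆ ℕ and define χ_A(n) = 2·1_A(n) − 1. Then A is a normal set if and only if for every k ≥ 0 and all integers 0 < i_1 < i_2 < … < i_k one has lim_{N→∞} (1/N)·Σ_{n=1}^{N} χ_A(n)·χ_A(n+i_1)·…·χ_A(n+i_k) = 0. -/

import Mathlib

open Filter Topology

noncomputable section

open scoped Classical

/-- A ⊆ ℕ is a normal set: every binary word w of length k occurs in the
indicator sequence of A with asymptotic frequency 2^(-k). -/
def IsNormalSet (A : Set ℕ) : Prop :=
  ∀ k : ℕ, 1 ≤ k → ∀ w : Fin k → Bool,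
    Tendsto (fun N : ℕ =>
        (((Finset.Icc 1 N).filter
            (fun n => ∀ i : Fin k, ((n + (i : ℕ)) ∈ A ↔ w i = true))).card : ℝ) / N)
      atTop (nhds (1 / 2 ^ k))

/-- χ_A(n) = 2·1_A(n) − 1. -/
def chi (A : Set ℕ) : ℕ → ℝ := fun n => if n ∈ A then 1 else -1

lemma shift_avg (f : ℕ → ℝ) (m : ℕ)
    (h : Tendsto (fun N : ℕ => (1/(N:ℝ)) * ∑ n ∈ Finset.Icc 1 N, f n) atTop (nhds 0)) :
    Tendsto (fun N : ℕ => (1/(N:ℝ)) * ∑ n ∈ Finset.Icc 1 N, f (n+m)) atTop (nhds 0) := by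
  have key : ∀ N : ℕ, ∑ n ∈ Finset.Icc 1 N, f (n+m)
      = (∑ n ∈ Finset.Icc 1 (N+m), f n) - ∑ n ∈ Finset.Icc 1 m, f n := by
    intro N
    have h1 : ∑ n ∈ Finset.Icc 1 N, f (n+m) = ∑ n ∈ Finset.Icc (1+m) (N+m), f n := by
      rw [← Finset.map_add_right_Icc, Finset.sum_map]
      rfl
    have h2 : (∑ n ∈ Finset.Ioc 0 m, f n) + ∑ n ∈ Finset.Ioc m (N+m), f n
        = ∑ n ∈ Finset.Ioc 0 (N+m), f n :=
      Finset.sum_Ioc_consecutive _ (Nat.zero_le m) (Nat.le_add_left m N)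
    have e1 : Finset.Icc (1+m) (N+m) = Finset.Ioc m (N+m) := by
      rw [Nat.add_comm 1 m, Finset.Icc_add_one_left_eq_Ioc]
    have e2 : Finset.Icc 1 (N+m) = Finset.Ioc 0 (N+m) := by
      rw [← Finset.Icc_add_one_left_eq_Ioc, Nat.zero_add]
    have e3 : Finset.Icc 1 m = Finset.Ioc 0 m := by
      rw [← Finset.Icc_add_one_left_eq_Ioc, Nat.zero_add]
    rw [h1, e1, e2, e3]
    linarith [h2]
  have hmain : Tendsto (fun N : ℕ =>
      (((N:ℝ)+m)/N) * ((1/((N:ℝ)+m)) * ∑ n ∈ Finset.Icc 1 (N+m), f n)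
        - (∑ n ∈ Finset.Icc 1 m, f n) / N) atTop (nhds 0) := by
    have t1 : Tendsto (fun N : ℕ => ((N:ℝ)+m)/N) atTop (nhds 1) := by
      have : Tendsto (fun N : ℕ => 1 + (m:ℝ)/N) atTop (nhds (1+0)) :=
        tendsto_const_nhds.add (tendsto_const_div_atTop_nhds_zero_nat (m:ℝ))
      rw [add_zero] at this
      refine this.congr' ?_
      filter_upwards [eventually_ge_atTop 1] with N hN
      have : (N:ℝ) ≠ 0 := by positivity
      field_simp
    have t2 : Tendsto (fun N : ℕ => (1/((N:ℝ)+m)) * ∑ n ∈ Finset.Icc 1 (N+m), f n)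
        atTop (nhds 0) := by
      have := h.comp (tendsto_add_atTop_nat m)
      refine this.congr ?_
      intro N; simp only [Function.comp]; push_cast; ring_nf
    have t3 : Tendsto (fun N : ℕ => (∑ n ∈ Finset.Icc 1 m, f n) / N) atTop (nhds 0) :=
      tendsto_const_div_atTop_nhds_zero_nat _
    have := (t1.mul t2).sub t3
    simpa using this
  refine hmain.congr' ?_
  filter_upwards [eventually_ge_atTop 1] with N hN
  have hN0 : (N:ℝ) ≠ 0 := by
    have : (1:ℝ) ≤ N := by exact_mod_cast hN
    linarith
  have hNm : (N:ℝ) + m ≠ 0 := by positivity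
  rw [key N]
  field_simp

lemma corr_general (A : Set ℕ)
    (H : ∀ k : ℕ, ∀ i : Fin k → ℕ, StrictMono i → (∀ j, 0 < i j) →
        Tendsto (fun N : ℕ => (1 / (N : ℝ)) * ∑ n ∈ Finset.Icc 1 N,
          chi A n * ∏ j : Fin k, chi A (n + i j)) atTop (nhds 0)) :
    ∀ S : Finset ℕ, S.Nonempty →
      Tendsto (fun N : ℕ => (1/(N:ℝ)) * ∑ n ∈ Finset.Icc 1 N, ∏ x ∈ S, chi A (n+x))
        atTop (nhds 0) := by
  intro S hS
  set m := S.min' hS with hm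
  set S' : Finset ℕ := (S.erase m).image (· - m) with hS'
  set k := S'.card with hk
  let e : Fin k ≃o {x // x ∈ S'} := S'.orderIsoOfFin rfl
  have hemem : ∀ j : Fin k, ((e j : ℕ)) ∈ S' := fun j => (e j).2
  have hpos' : ∀ x ∈ S', 0 < x := by
    intro x hx
    simp only [hS', Finset.mem_image] at hx
    obtain ⟨y, hy, rfl⟩ := hx
    have hym : y ∈ S := Finset.mem_of_mem_erase hy
    have hne : y ≠ m := Finset.ne_of_mem_erase hy
    have : m ≤ y := S.min'_le y hym
    omega
  have hmono : StrictMono (fun j : Fin k => (e j : ℕ)) := by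
    intro a b hab
    exact_mod_cast e.strictMono hab
  have hpos : ∀ j : Fin k, 0 < (e j : ℕ) := fun j => hpos' _ (hemem j)
  have H1 := H k (fun j => (e j : ℕ)) hmono hpos
  -- rewrite the product over Fin k as product over S'
  have hprod : ∀ n : ℕ, (∏ j : Fin k, chi A (n + (e j : ℕ))) = ∏ x ∈ S', chi A (n + x) := by
    intro n
    rw [← Finset.prod_coe_sort S' (fun x => chi A (n + x))]
    exact Equiv.prod_comp e.toEquiv (fun x => chi A (n + (x : ℕ)))
  have H1' : Tendsto (fun N : ℕ => (1/(N:ℝ)) * ∑ n ∈ Finset.Icc 1 N,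
      (chi A n * ∏ x ∈ S', chi A (n + x))) atTop (nhds 0) := by
    refine H1.congr fun N => ?_
    congr 1
    exact Finset.sum_congr rfl fun n _ => by rw [hprod]
  have H2 := shift_avg (fun n => chi A n * ∏ x ∈ S', chi A (n + x)) m H1'
  refine H2.congr fun N => ?_
  congr 1
  refine Finset.sum_congr rfl fun n _ => ?_
  -- chi A (n+m) * ∏_{x∈S'} chi A (n+m+x) = ∏_{x∈S} chi A (n+x)
  have hmem : m ∈ S := S.min'_mem hS
  have hstep : ∏ x ∈ S', chi A (n + m + x) = ∏ y ∈ S.erase m, chi A (n + y) := by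
    rw [hS', Finset.prod_image ?hinj]
    case hinj =>
      intro a ha b hb hab
      have ham : m ≤ a := S.min'_le a (Finset.mem_of_mem_erase ha)
      have hbm : m ≤ b := S.min'_le b (Finset.mem_of_mem_erase hb)
      change a - m = b - m at hab
      omega
    refine Finset.prod_congr rfl fun y hy => ?_
    have hym : m ≤ y := S.min'_le y (Finset.mem_of_mem_erase hy)
    congr 1
    omega
  rw [hstep]
  exact Finset.mul_prod_erase S (fun y => chi A (n+y)) hmem

lemma P1 (A : Set ℕ) (k : ℕ) (w : Fin k → Bool) (n : ℕ) :
    (if (∀ i : Fin k, ((n + (i:ℕ)) ∈ A ↔ w i = true)) then (1:ℝ) else 0)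
      = (1/2^k) * ∑ t ∈ (Finset.univ : Finset (Fin k)).powerset,
          (∏ i ∈ t, (if w i then (1:ℝ) else -1)) * ∏ i ∈ t, chi A (n + (i:ℕ)) := by
  have hfac : ∀ i : Fin k, (if ((n + (i:ℕ)) ∈ A ↔ w i = true) then (1:ℝ) else 0)
      = ((if w i then (1:ℝ) else -1) * chi A (n+(i:ℕ)) + 1) / 2 := by
    intro i
    by_cases hA : (n + (i:ℕ)) ∈ A <;> cases hw : w i <;>
      simp [chi, hA, hw] <;> norm_num
  have h1 : (if (∀ i : Fin k, ((n + (i:ℕ)) ∈ A ↔ w i = true)) then (1:ℝ) else 0)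
      = ∏ i : Fin k, (if ((n + (i:ℕ)) ∈ A ↔ w i = true) then (1:ℝ) else 0) := by
    rw [Finset.prod_boole]
    simp
  rw [h1]
  calc ∏ i : Fin k, (if ((n + (i:ℕ)) ∈ A ↔ w i = true) then (1:ℝ) else 0)
      = ∏ i : Fin k, (((if w i then (1:ℝ) else -1) * chi A (n+(i:ℕ)) + 1) / 2) := by
        exact Finset.prod_congr rfl fun i _ => hfac i
    _ = (∏ i : Fin k, ((if w i then (1:ℝ) else -1) * chi A (n+(i:ℕ)) + 1)) / 2^k := by
        rw [Finset.prod_div_distrib, Finset.prod_const]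
        simp
    _ = (∑ t ∈ (Finset.univ : Finset (Fin k)).powerset,
          ∏ i ∈ t, ((if w i then (1:ℝ) else -1) * chi A (n+(i:ℕ)))) / 2^k := by
        rw [Finset.prod_add]
        simp
    _ = (1/2^k) * ∑ t ∈ (Finset.univ : Finset (Fin k)).powerset,
          (∏ i ∈ t, (if w i then (1:ℝ) else -1)) * ∏ i ∈ t, chi A (n + (i:ℕ)) := by
        rw [div_eq_mul_inv, mul_comm, ← one_div]
        congr 1
        exact Finset.sum_congr rfl fun t _ => Finset.prod_mul_distrib

lemma backward (A : Set ℕ)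
    (H : ∀ k : ℕ, ∀ i : Fin k → ℕ, StrictMono i → (∀ j, 0 < i j) →
        Tendsto (fun N : ℕ => (1 / (N : ℝ)) * ∑ n ∈ Finset.Icc 1 N,
          chi A n * ∏ j : Fin k, chi A (n + i j)) atTop (nhds 0)) :
    ∀ k : ℕ, 1 ≤ k → ∀ w : Fin k → Bool,
      Tendsto (fun N : ℕ =>
          (((Finset.Icc 1 N).filter
              (fun n => ∀ i : Fin k, ((n + (i : ℕ)) ∈ A ↔ w i = true))).card : ℝ) / N)
        atTop (nhds (1 / 2 ^ k)) := by
  intro k _ w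
  have hrw : ∀ N : ℕ,
      (((Finset.Icc 1 N).filter
          (fun n => ∀ i : Fin k, ((n + (i : ℕ)) ∈ A ↔ w i = true))).card : ℝ) / N
      = ∑ t ∈ (Finset.univ : Finset (Fin k)).powerset,
          ((1/2^k) * ∏ i ∈ t, (if w i then (1:ℝ) else -1)) *
            ((1/(N:ℝ)) * ∑ n ∈ Finset.Icc 1 N, ∏ i ∈ t, chi A (n + (i:ℕ))) := by
    intro N
    rw [← Finset.sum_boole]
    rw [Finset.sum_congr rfl fun n _ => P1 A k w n]
    rw [← Finset.mul_sum, Finset.sum_comm, Finset.mul_sum, Finset.sum_div]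
    refine Finset.sum_congr rfl fun t _ => ?_
    rw [← Finset.mul_sum]
    ring
  have hlim : ∀ t ∈ (Finset.univ : Finset (Fin k)).powerset,
      Tendsto (fun N : ℕ =>
          ((1/2^k) * ∏ i ∈ t, (if w i then (1:ℝ) else -1)) *
            ((1/(N:ℝ)) * ∑ n ∈ Finset.Icc 1 N, ∏ i ∈ t, chi A (n + (i:ℕ))))
        atTop (nhds (if t = ∅ then (1/2^k : ℝ) else 0)) := by
    intro t _
    by_cases ht : t = ∅
    · subst ht
      simp only [Finset.prod_empty, mul_one, if_pos]
      have h1 : Tendsto (fun N : ℕ => (1/(N:ℝ)) * ∑ n ∈ Finset.Icc 1 N, (1:ℝ))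
          atTop (nhds 1) := by
        refine tendsto_const_nhds.congr' ?_
        filter_upwards [eventually_ge_atTop 1] with N hN
        rw [Finset.sum_const, Nat.card_Icc]
        have hN0 : (N:ℝ) ≠ 0 := by
          have : (1:ℝ) ≤ N := by exact_mod_cast hN
          linarith
        simp
        field_simp
      have := (tendsto_const_nhds (x := (1/2^k : ℝ))).mul h1
      simpa using this
    · rw [if_neg ht]
      have htne : (t.image (Fin.val)).Nonempty :=
        (Finset.image_nonempty).2 (Finset.nonempty_of_ne_empty ht)
      have h0 := corr_general A H (t.image Fin.val) htne
      have h0' : Tendsto (fun N : ℕ =>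
          (1/(N:ℝ)) * ∑ n ∈ Finset.Icc 1 N, ∏ i ∈ t, chi A (n + (i:ℕ)))
          atTop (nhds 0) := by
        refine h0.congr fun N => ?_
        congr 1
        refine Finset.sum_congr rfl fun n _ => ?_
        rw [Finset.prod_image (fun a _ b _ h => Fin.val_injective h)]
      have := (tendsto_const_nhds
          (x := (1/2^k : ℝ) * ∏ i ∈ t, (if w i then (1:ℝ) else -1))).mul h0'
      simpa using this
  have hsum := tendsto_finset_sum _ hlim
  have hval : ∑ t ∈ (Finset.univ : Finset (Fin k)).powerset,
      (if t = ∅ then (1/2^k : ℝ) else 0) = 1/2^k := by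
    rw [Finset.sum_eq_single (∅ : Finset (Fin k))]
    · simp
    · intro t _ ht; rw [if_neg ht]
    · intro h; exact absurd (Finset.empty_mem_powerset _) h
  rw [hval] at hsum
  exact hsum.congr fun N => (hrw N).symm

lemma P2 (A : Set ℕ) (L : ℕ) (S : Finset ℕ) (hS : ∀ x ∈ S, x < L) (n : ℕ) :
    ∏ x ∈ S, chi A (n+x)
      = ∑ w : Fin L → Bool,
          (∏ j : Fin L, (if (j:ℕ) ∈ S then (if w j then (1:ℝ) else -1) else 1))
          * (if (∀ j : Fin L, ((n + (j:ℕ)) ∈ A ↔ w j = true)) then (1:ℝ) else 0) := by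
  rw [Finset.sum_eq_single (fun j : Fin L => decide ((n + (j:ℕ)) ∈ A))]
  · have hcond : ∀ j : Fin L, ((n + (j:ℕ)) ∈ A ↔ decide ((n + (j:ℕ)) ∈ A) = true) := by
      intro j; simp
    rw [if_pos hcond, mul_one, ← Finset.prod_filter]
    refine Finset.prod_bij (fun (x : ℕ) (hx : x ∈ S) => (⟨x, hS x hx⟩ : Fin L)) ?_ ?_ ?_ ?_
    · intro x hx
      simp [hx]
    · intro a ha b hb hab
      simpa using congrArg Fin.val hab
    · intro j hj
      simp only [Finset.mem_filter, Finset.mem_univ, true_and] at hj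
      exact ⟨(j:ℕ), hj, rfl⟩
    · intro x hx
      by_cases hA : (n + x) ∈ A <;> simp [chi, hA]
  · intro w _ hw
    rw [if_neg, mul_zero]
    intro hcond
    apply hw
    funext j
    have h := hcond j
    by_cases hA : (n + (j:ℕ)) ∈ A
    · simp only [hA, true_iff] at h
      simp [h, hA]
    · simp only [hA, false_iff, Bool.not_eq_true] at h
      simp [h, hA]
  · intro h
    exact absurd (Finset.mem_univ _) h

lemma forward (A : Set ℕ)
    (hA : ∀ k : ℕ, 1 ≤ k → ∀ w : Fin k → Bool,
      Tendsto (fun N : ℕ =>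
          (((Finset.Icc 1 N).filter
              (fun n => ∀ i : Fin k, ((n + (i : ℕ)) ∈ A ↔ w i = true))).card : ℝ) / N)
        atTop (nhds (1 / 2 ^ k))) :
    ∀ k : ℕ, ∀ i : Fin k → ℕ, StrictMono i → (∀ j, 0 < i j) →
      Tendsto (fun N : ℕ => (1 / (N : ℝ)) * ∑ n ∈ Finset.Icc 1 N,
        chi A n * ∏ j : Fin k, chi A (n + i j)) atTop (nhds 0) := by
  intro k i hmono hpos
  set S : Finset ℕ := insert 0 (Finset.image i Finset.univ) with hSdef
  have hSne : S.Nonempty := ⟨0, Finset.mem_insert_self _ _⟩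
  set L : ℕ := S.max' hSne + 1 with hL
  have hSL : ∀ x ∈ S, x < L := fun x hx => Nat.lt_succ_of_le (S.le_max' x hx)
  have hL1 : 1 ≤ L := Nat.succ_le_succ (Nat.zero_le _)
  have h0S : (0:ℕ) ∈ S := Finset.mem_insert_self _ _
  have hterm : ∀ n, chi A n * ∏ j : Fin k, chi A (n + i j) = ∏ x ∈ S, chi A (n+x) := by
    intro n
    have h0 : (0:ℕ) ∉ Finset.image i Finset.univ := by
      simp only [Finset.mem_image, Finset.mem_univ, true_and, not_exists]
      intro j hj
      exact (hpos j).ne' hj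
    rw [hSdef, Finset.prod_insert h0,
      Finset.prod_image (fun a _ b _ h => hmono.injective h)]
    simp
  have hrw : ∀ N : ℕ,
      (1/(N:ℝ)) * ∑ n ∈ Finset.Icc 1 N, chi A n * ∏ j : Fin k, chi A (n + i j)
      = ∑ w : Fin L → Bool,
          (∏ j : Fin L, (if (j:ℕ) ∈ S then (if w j then (1:ℝ) else -1) else 1)) *
          ((((Finset.Icc 1 N).filter
              (fun n => ∀ j : Fin L, ((n + (j:ℕ)) ∈ A ↔ w j = true))).card : ℝ) / N) := by
    intro N
    rw [Finset.sum_congr rfl fun n _ => (hterm n).trans (P2 A L S hSL n)]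
    rw [Finset.sum_comm, Finset.mul_sum]
    refine Finset.sum_congr rfl fun w _ => ?_
    rw [← Finset.mul_sum, Finset.sum_boole]
    ring
  have hc0 : (∑ w : Fin L → Bool,
      ∏ j : Fin L, (if (j:ℕ) ∈ S then (if w j then (1:ℝ) else -1) else 1)) = 0 := by
    have h := Finset.prod_univ_sum (fun _ : Fin L => (Finset.univ : Finset Bool))
      (fun j b => if (j:ℕ) ∈ S then (if b then (1:ℝ) else -1) else 1)
    rw [Fintype.piFinset_univ] at h
    rw [← h]
    refine Finset.prod_eq_zero (Finset.mem_univ (⟨0, hL1⟩ : Fin L)) ?_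
    have h0 : (((⟨0, hL1⟩ : Fin L)):ℕ) ∈ S := h0S
    simp only [h0, if_true]
    simp
  have hlim : ∀ w ∈ (Finset.univ : Finset (Fin L → Bool)),
      Tendsto (fun N : ℕ =>
          (∏ j : Fin L, (if (j:ℕ) ∈ S then (if w j then (1:ℝ) else -1) else 1)) *
          ((((Finset.Icc 1 N).filter
              (fun n => ∀ j : Fin L, ((n + (j:ℕ)) ∈ A ↔ w j = true))).card : ℝ) / N))
        atTop (nhds ((∏ j : Fin L, (if (j:ℕ) ∈ S then (if w j then (1:ℝ) else -1) else 1))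
          * (1/2^L))) := fun w _ => tendsto_const_nhds.mul (hA L hL1 w)
  have hsum := tendsto_finset_sum _ hlim
  rw [← Finset.sum_mul, hc0, zero_mul] at hsum
  exact hsum.congr fun N => (hrw N).symm

/-- A is normal iff all correlation averages of χ_A along distinct shifts vanish. -/
theorem isNormalSet_iff_correlations_vanish (A : Set ℕ) :
    IsNormalSet A ↔
      ∀ k : ℕ, ∀ i : Fin k → ℕ, StrictMono i → (∀ j, 0 < i j) →
        Tendsto (fun N : ℕ =>
            (1 / (N : ℝ)) * ∑ n ∈ Finset.Icc 1 N,
              chi A n * ∏ j : Fin k, chi A (n + i j))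
          atTop (nhds 0) :=
  ⟨fun h => forward A h, fun h => backward A h⟩

end
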